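/- Let G be a digraph of order n with minimum outdegree δ⁺(G) ≥ d, let x and y be vertices of G with x ≠ y such that the indegree of y is at least d/2, and let S ⊆ V(G)∖{x,y} be a set of vertices such that G−S contains no directed path from x to y. Let Y be the set of all vertices z such that G−S contains a directed path from z to y (so y ∈ Y and x ∉ Y), and let C be the vertex set of the connected component containing x of the undirected graph underlying G−(Y∪S). Then there is no edge of G directed from a vertex of C to a vertex outside C∪S; consequently the subdigraph G₁ of G induced by C satisfies δ⁺(G₁) ≥ d − |S| and |G₁| ≤ n − d/2 − 1. -/

import Mathlib

open scoped Classical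

/-- The outdegree of a vertex `v` in the digraph with adjacency relation `A`. -/
noncomputable def outDeg {V : Type*} [Fintype V] (A : V → V → Prop) (v : V) : ℕ :=
  (Finset.univ.filter fun w => A v w).card

/-- The indegree of a vertex `v` in the digraph with adjacency relation `A`. -/
noncomputable def inDeg {V : Type*} [Fintype V] (A : V → V → Prop) (v : V) : ℕ :=
  (Finset.univ.filter fun w => A w v).card

/-- There is a directed path from `x` to `y` all of whose vertices lie in `s`
(given by its full vertex sequence `p`, which is a nonempty repetition-free chain
of directed edges starting at `x` and ending at `y`). -/
def DipathIn {V : Type*} (A : V → V → Prop) (s : Set V) (x y : V) : Prop :=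
  ∃ p : List V, p ≠ [] ∧ p.head? = some x ∧ p.getLast? = some y ∧
    List.Chain' A p ∧ p.Nodup ∧ ∀ v ∈ p, v ∈ s

/-- The undirected graph underlying the subdigraph induced on the vertex set `s` of
the digraph with adjacency relation `A`: `u` and `v` are joined whenever both lie in
`s` and there is a directed edge between them in some direction. -/
def underlyingGraph {V : Type*} (A : V → V → Prop) (s : Set V) : SimpleGraph V where
  Adj u v := u ≠ v ∧ u ∈ s ∧ v ∈ s ∧ (A u v ∨ A v u)
  symm := ⟨fun u v ⟨h1, h2, h3, h4⟩ => ⟨h1.symm, h3, h2, h4.symm⟩⟩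
  loopless := ⟨fun v h => h.1 rfl⟩

/-- Let `G` be a digraph of order `n` with minimum outdegree at least `d`, let
`x ≠ y` be vertices with the indegree of `y` at least `d/2`, and let
`S ⊆ V(G) \ {x,y}` be such that `G - S` contains no directed path from `x` to `y`.
Let `Y` be the set of vertices `z` such that `G - S` contains a directed path from
`z` to `y`, and let `C` be the vertex set of the connected component containing `x`
of the undirected graph underlying `G - (Y ∪ S)`. Then no edge of `G` is directed
from a vertex of `C` to a vertex outside `C ∪ S`; consequently the subdigraph `G₁`
of `G` induced by `C` satisfies `δ⁺(G₁) ≥ d - |S|` and `|G₁| ≤ n - d/2 - 1`. -/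
lemma dipath_suffix {V : Type*} (A : V → V → Prop) (s : Set V) (y : V) :
    ∀ p : List V, List.Chain' A p → p.getLast? = some y → p.Nodup →
      (∀ v ∈ p, v ∈ s) → ∀ w ∈ p, DipathIn A s w y := by
  intro p
  induction p with
  | nil => intro _ _ _ _ w hw; simp at hw
  | cons a t ih =>
    intro hchain hlast hnodup hmem w hw
    rcases List.mem_cons.mp hw with h | hw
    · exact ⟨a :: t, by simp, by simp [h], hlast, hchain, hnodup, hmem⟩
    · have ht : t ≠ [] := List.ne_nil_of_mem hw
      refine ih hchain.tail ?_ hnodup.of_cons (fun v hv => hmem v (List.mem_cons_of_mem _ hv)) w hw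
      obtain ⟨b, t', rfl⟩ := List.exists_cons_of_ne_nil ht
      rwa [List.getLast?_cons_cons] at hlast

lemma dipath_cons {V : Type*} {A : V → V → Prop} {s : Set V} {u v y : V}
    (huv : A u v) (hus : u ∈ s) (hnot : ¬ DipathIn A s u y)
    (h : DipathIn A s v y) : DipathIn A s u y := by
  obtain ⟨p, hne, hhead, hlast, hchain, hnodup, hmem⟩ := h
  have hup : u ∉ p := fun hup => hnot (dipath_suffix A s y p hchain hlast hnodup hmem u hup)
  obtain ⟨b, t, rfl⟩ := List.exists_cons_of_ne_nil hne
  have hb : b = v := by simpa using hhead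
  have huvb : A u b := by rw [hb]; exact huv
  refine ⟨u :: b :: t, by simp, rfl, ?_, List.isChain_cons_cons.mpr ⟨huvb, hchain⟩,
    List.nodup_cons.mpr ⟨hup, hnodup⟩, ?_⟩
  · rwa [List.getLast?_cons_cons]
  · intro w hw
    rcases List.mem_cons.mp hw with h | hw
    · rw [h]; exact hus
    · exact hmem w hw

lemma reachable_mem {V : Type*} {A : V → V → Prop} {s : Set V} {u v : V}
    (h : (underlyingGraph A s).Reachable u v) (hu : u ∈ s) : v ∈ s := by
  obtain ⟨w⟩ := h
  induction w with
  | nil => exact hu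
  | cons h p ih => exact ih h.2.2.1

lemma outDeg_eq_ncard {V : Type*} [Fintype V] (A : V → V → Prop) (v : V) :
    outDeg A v = {w : V | A v w}.ncard := by
  rw [Set.ncard_eq_toFinset_card', outDeg]
  congr 1
  ext w
  simp

lemma inDeg_eq_ncard {V : Type*} [Fintype V] (A : V → V → Prop) (v : V) :
    inDeg A v = {w : V | A w v}.ncard := by
  rw [Set.ncard_eq_toFinset_card', inDeg]
  congr 1
  ext w
  simp

theorem no_edge_leaving_component {V : Type*} [Fintype V]
    (A : V → V → Prop) (hirr : Irreflexive A) (n d : ℕ)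
    (hn : Fintype.card V = n) (hd : ∀ v : V, d ≤ outDeg A v)
    (x y : V) (hxy : x ≠ y) (hindeg : (d : ℝ) / 2 ≤ (inDeg A y : ℝ))
    (S : Finset V) (hxS : x ∉ S) (hyS : y ∉ S)
    (hnopath : ¬ DipathIn A ((↑S : Set V))ᶜ x y)
    (Y : Set V) (hY : Y = {z : V | DipathIn A ((↑S : Set V))ᶜ z y})
    (C : Set V) (hC : C = {c : V | (underlyingGraph A (Y ∪ (↑S : Set V))ᶜ).Reachable x c}) :
    (∀ u ∈ C, ∀ v : V, A u v → v ∈ C ∪ (↑S : Set V)) ∧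
    (∀ v ∈ C, (d : ℝ) - (S.card : ℝ) ≤ ({w : V | w ∈ C ∧ A v w}.ncard : ℝ)) ∧
    (C.ncard : ℝ) ≤ (n : ℝ) - (d : ℝ) / 2 - 1 := by
  have hyY : y ∈ Y := by
    rw [hY]
    exact ⟨[y], by simp, rfl, rfl, List.isChain_singleton y, by simp, by simpa using hyS⟩
  have hxY : x ∉ Y := by rw [hY]; exact hnopath
  have hxmem : x ∈ (Y ∪ (↑S : Set V))ᶜ := by
    simp only [Set.mem_compl_iff, Set.mem_union, not_or]
    exact ⟨hxY, hxS⟩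
  have hCsub : C ⊆ (Y ∪ (↑S : Set V))ᶜ := by
    intro c hc
    rw [hC] at hc
    exact reachable_mem hc hxmem
  -- Claim 1
  have claim1 : ∀ u ∈ C, ∀ v : V, A u v → v ∈ C ∪ (↑S : Set V) := by
    intro u hu v hA
    by_contra hv
    simp only [Set.mem_union, Finset.mem_coe, not_or] at hv
    obtain ⟨hvC, hvS⟩ := hv
    have humem := hCsub hu
    simp only [Set.mem_compl_iff, Set.mem_union, not_or, Finset.mem_coe] at humem
    obtain ⟨huY, huS⟩ := humem
    have hvY : v ∉ Y := by
      intro hvY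
      apply huY
      rw [hY] at hvY ⊢
      exact dipath_cons hA (by simpa using huS) (by rw [hY] at huY; exact huY) hvY
    have hvmem : v ∈ (Y ∪ (↑S : Set V))ᶜ := by
      simp only [Set.mem_compl_iff, Set.mem_union, not_or]
      exact ⟨hvY, hvS⟩
    have hne : u ≠ v := by rintro rfl; exact hirr u hA
    have hadj : (underlyingGraph A (Y ∪ (↑S : Set V))ᶜ).Adj u v :=
      ⟨hne, hCsub hu, hvmem, Or.inl hA⟩
    apply hvC
    rw [hC] at hu ⊢
    exact hu.trans hadj.reachable
  refine ⟨claim1, ?_, ?_⟩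
  -- Claim 2
  · intro v hv
    have hsub : {w : V | A v w} ⊆ {w : V | w ∈ C ∧ A v w} ∪ (↑S : Set V) := by
      intro w hw
      rcases claim1 v hv w hw with h | h
      · exact Or.inl ⟨h, hw⟩
      · exact Or.inr h
    have h1 : ({w : V | A v w}).ncard ≤ ({w : V | w ∈ C ∧ A v w}).ncard + S.card := by
      calc ({w : V | A v w}).ncard ≤ ({w : V | w ∈ C ∧ A v w} ∪ (↑S : Set V)).ncard :=
            Set.ncard_le_ncard hsub (Set.toFinite _)
        _ ≤ ({w : V | w ∈ C ∧ A v w}).ncard + (↑S : Set V).ncard := Set.ncard_union_le _ _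
        _ = ({w : V | w ∈ C ∧ A v w}).ncard + S.card := by rw [Set.ncard_coe_finset]
    have h2 : d ≤ ({w : V | A v w}).ncard := by rw [← outDeg_eq_ncard]; exact hd v
    have := h2.trans h1
    push_cast
    have : (d : ℝ) ≤ ({w : V | w ∈ C ∧ A v w}).ncard + S.card := by exact_mod_cast this
    linarith
  -- Claim 3
  · set D : Set V := {w : V | A w y} ∪ {y} with hD
    have hdisjD : Disjoint {w : V | A w y} ({y} : Set V) := by
      rw [Set.disjoint_singleton_right]
      exact fun h => hirr y h
    have hDcard : D.ncard = inDeg A y + 1 := by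
      rw [hD, Set.ncard_union_eq hdisjD (Set.toFinite _) (Set.toFinite _),
        Set.ncard_singleton, inDeg_eq_ncard]
    have hDsub : D ⊆ Y ∪ (↑S : Set V) := by
      rintro w (hw | hw)
      · by_cases hwS : w ∈ S
        · exact Or.inr hwS
        · left
          rw [hY]
          have hwy : w ≠ y := fun h => hirr y (h ▸ hw)
          exact ⟨[w, y], by simp, rfl, rfl, List.isChain_pair.mpr hw, by simp [hwy],
            by intro u hu; rcases List.mem_pair.mp hu with rfl | rfl
               · simpa using hwS
               · simpa using hyS⟩
      · rw [Set.mem_singleton_iff] at hw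
        exact Or.inl (hw ▸ hyY)
    have hdisj : Disjoint C D := by
      rw [Set.disjoint_left]
      intro c hc hcD
      have := hCsub hc
      exact this (hDsub hcD)
    have hsum : C.ncard + D.ncard ≤ n := by
      rw [← Set.ncard_union_eq hdisj (Set.toFinite _) (Set.toFinite _), ← hn]
      have h := Set.ncard_le_ncard (Set.subset_univ (C ∪ D)) Set.finite_univ
      rwa [Set.ncard_univ, Nat.card_eq_fintype_card] at h
    rw [hDcard] at hsum
    have : (C.ncard : ℝ) + (inDeg A y : ℝ) + 1 ≤ n := by exact_mod_cast hsum
    linarith
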